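/- Let p_0, …, p_{m-1} be distinct primes and k_0, …, k_{m-1} positive integers. For each i, let ℤ_{(p_i)} be the subring of ℚ of rationals with denominator coprime to p_i, let B_i be an infinite subset of ℝ linearly independent over ℤ_{(p_i)}, and let G_{p_i} be the additive subgroup of ℝ underlying the ℤ_{(p_i)}-submodule spanned by B_i. Let G := ℚ ⊕ ⨁_{i=0}^{m-1} G_{p_i}^{k_i} be the direct sum of these abelian groups, where G_{p_i}^{k_i} is the direct sum of k_i copies of G_{p_i}. Then: (1) for each i ∈ {0, …, m-1}, the quotient G / p_i G is infinite; and (2) for every prime q ∉ {p_0, …, p_{m-1}}, qG = G. (That is, the singular primes of G are exactly p_0, …, p_{m-1}.) -/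

import Mathlib

/-- The set of rationals expressible as `a / b` with `b` not divisible by `p`,
i.e. the localization `ℤ_{(p)}` realized inside `ℚ`. -/
def ZLocSet (p : ℕ) : Set ℚ :=
  {q : ℚ | ∃ a b : ℤ, ¬ (p : ℤ) ∣ b ∧ q = (a : ℚ) / (b : ℚ)}

/-- The additive subgroup of `ℝ` underlying the `ℤ_{(p)}`-submodule spanned by `B`:
the additive closure of all products `q * b` with `q ∈ ℤ_{(p)}` and `b ∈ B`. -/
def GpSubgroup (p : ℕ) (B : Set ℝ) : AddSubgroup ℝ :=
  AddSubgroup.closure {y : ℝ | ∃ q ∈ ZLocSet p, ∃ b ∈ B, y = (q : ℝ) * b}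

/-- `B ⊆ ℝ` is linearly independent over `ℤ_{(p)}`: any finite `ℤ_{(p)}`-linear
combination of elements of `B` which vanishes has all coefficients zero. -/
def LinIndepOverZLoc (p : ℕ) (B : Set ℝ) : Prop :=
  ∀ (t : Finset ℝ) (c : ℝ → ℚ), ↑t ⊆ B → (∀ x ∈ t, c x ∈ ZLocSet p) →
    (∑ x ∈ t, (c x : ℝ) * x) = 0 → ∀ x ∈ t, c x = 0

/-- The subgroup `nG = {n • g : g ∈ G}` of an abelian group `G`. -/
def nSMulSubgroup (G : Type*) [AddCommGroup G] (n : ℕ) : AddSubgroup G where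
  carrier := Set.range fun g : G => n • g
  zero_mem' := ⟨0, smul_zero n⟩
  add_mem' := by
    rintro _ _ ⟨g, rfl⟩ ⟨g', rfl⟩
    exact ⟨g + g', smul_add n g g'⟩
  neg_mem' := by
    rintro _ ⟨g, rfl⟩
    exact ⟨-g, by simp [smul_neg]⟩


section Aux

variable {p : ℕ}

lemma zloc_ne_zero {b : ℤ} (hb : ¬ (p : ℤ) ∣ b) : b ≠ 0 := by
  rintro rfl; exact hb (dvd_zero _)

lemma zloc_zero_mem (hp : p.Prime) : (0 : ℚ) ∈ ZLocSet p :=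
  ⟨0, 1, by simpa using fun h => by have := Int.le_of_dvd one_pos h; have := hp.two_le; omega,
    by norm_num⟩

lemma zloc_int_mem (hp : p.Prime) (n : ℤ) : (n : ℚ) ∈ ZLocSet p :=
  ⟨n, 1, by simpa using fun h => by have := Int.le_of_dvd one_pos h; have := hp.two_le; omega,
    by norm_num⟩

lemma zloc_add_mem (hp : p.Prime) {x y : ℚ} (hx : x ∈ ZLocSet p) (hy : y ∈ ZLocSet p) :
    x + y ∈ ZLocSet p := by
  obtain ⟨a, b, hb, rfl⟩ := hx
  obtain ⟨a', b', hb', rfl⟩ := hy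
  refine ⟨a * b' + a' * b, b * b', ?_, ?_⟩
  · intro h
    rcases (Int.Prime.dvd_mul' (by exact_mod_cast hp) h) with h | h
    exacts [hb h, hb' h]
  · have h1 : (b : ℚ) ≠ 0 := Int.cast_ne_zero.mpr (zloc_ne_zero hb)
    have h2 : (b' : ℚ) ≠ 0 := Int.cast_ne_zero.mpr (zloc_ne_zero hb')
    push_cast
    field_simp

lemma zloc_neg_mem {x : ℚ} (hx : x ∈ ZLocSet p) : -x ∈ ZLocSet p := by
  obtain ⟨a, b, hb, rfl⟩ := hx
  exact ⟨-a, b, hb, by push_cast; ring⟩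

lemma zloc_mul_mem (hp : p.Prime) {x y : ℚ} (hx : x ∈ ZLocSet p) (hy : y ∈ ZLocSet p) :
    x * y ∈ ZLocSet p := by
  obtain ⟨a, b, hb, rfl⟩ := hx
  obtain ⟨a', b', hb', rfl⟩ := hy
  refine ⟨a * a', b * b', ?_, ?_⟩
  · intro h
    rcases (Int.Prime.dvd_mul' (by exact_mod_cast hp) h) with h | h
    exacts [hb h, hb' h]
  · push_cast; rw [div_mul_div_comm]

lemma zloc_div_mem (hp : p.Prime) {q : ℕ} (hq : q.Prime) (hne : q ≠ p) {x : ℚ}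
    (hx : x ∈ ZLocSet p) : x / q ∈ ZLocSet p := by
  obtain ⟨a, b, hb, rfl⟩ := hx
  refine ⟨a, b * q, ?_, ?_⟩
  · intro h
    rcases (Int.Prime.dvd_mul' (by exact_mod_cast hp) h) with h | h
    · exact hb h
    · have : p ∣ q := by exact_mod_cast h
      exact hne ((Nat.prime_dvd_prime_iff_eq hp hq).mp this).symm
  · push_cast; rw [div_div]

lemma zloc_one_mem (hp : p.Prime) : (1 : ℚ) ∈ ZLocSet p := by
  exact_mod_cast zloc_int_mem hp 1

lemma zloc_sub_mem (hp : p.Prime) {x y : ℚ} (hx : x ∈ ZLocSet p) (hy : y ∈ ZLocSet p) :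
    x - y ∈ ZLocSet p := by
  rw [sub_eq_add_neg]; exact zloc_add_mem hp hx (zloc_neg_mem hy)

lemma zloc_no_inv (hp : p.Prime) {x : ℚ} (hx : x ∈ ZLocSet p) (h : (p : ℚ) * x = 1) : False := by
  obtain ⟨a, b, hb, rfl⟩ := hx
  have hb0 : (b : ℚ) ≠ 0 := Int.cast_ne_zero.mpr (zloc_ne_zero hb)
  have : (p : ℚ) * a = b := by field_simp at h; exact_mod_cast h
  have : (p : ℤ) * a = b := by exact_mod_cast this
  exact hb ⟨a, this.symm⟩

lemma sum_ite_restrict (t s : Finset ℝ) (c : ℝ → ℚ) (h : s ⊆ t) :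
    ∑ x ∈ t, ((if x ∈ s then c x else 0 : ℚ) : ℝ) * x = ∑ x ∈ s, (c x : ℝ) * x := by
  have h2 : ∀ x ∈ t, x ∉ s → ((if x ∈ s then c x else 0 : ℚ) : ℝ) * x = 0 := by
    intro x _ hx; rw [if_neg hx]; simp
  rw [← Finset.sum_subset h h2]
  exact Finset.sum_congr rfl fun x hx => by rw [if_pos hx]

/-- A basis element is in the subgroup. -/
lemma basis_mem (hp : p.Prime) {B : Set ℝ} {b : ℝ} (hb : b ∈ B) : b ∈ GpSubgroup p B :=
  AddSubgroup.subset_closure ⟨1, zloc_int_mem hp 1, b, hb, by norm_num⟩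

/-- Representation of elements of `GpSubgroup` as finite `ℤ_{(p)}`-combinations. -/
lemma gp_repr (hp : p.Prime) {B : Set ℝ} {y : ℝ} (hy : y ∈ GpSubgroup p B) :
    ∃ (t : Finset ℝ) (c : ℝ → ℚ), ↑t ⊆ B ∧ (∀ x ∈ t, c x ∈ ZLocSet p) ∧
      y = ∑ x ∈ t, (c x : ℝ) * x := by
  induction hy using AddSubgroup.closure_induction with
  | mem z hz =>
      obtain ⟨q, hq, b, hb, rfl⟩ := hz
      exact ⟨{b}, fun _ => q, by simpa using hb, fun x _ => hq, by simp⟩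
  | zero => exact ⟨∅, fun _ => 0, by simp, by simp, by simp⟩
  | add z w hz hw ihz ihw =>
      obtain ⟨t1, c1, ht1, hc1, rfl⟩ := ihz
      obtain ⟨t2, c2, ht2, hc2, rfl⟩ := ihw
      refine ⟨t1 ∪ t2, fun x => (if x ∈ t1 then c1 x else 0) + (if x ∈ t2 then c2 x else 0),
        ?_, ?_, ?_⟩
      · push_cast; exact Set.union_subset ht1 ht2
      · intro x hx
        refine zloc_add_mem hp ?_ ?_ <;> split <;>
          first | exact hc1 _ ‹_› | exact hc2 _ ‹_› | exact zloc_zero_mem hp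
      · rw [← sum_ite_restrict (t1 ∪ t2) t1 c1 Finset.subset_union_left,
          ← sum_ite_restrict (t1 ∪ t2) t2 c2 Finset.subset_union_right,
          ← Finset.sum_add_distrib]
        exact Finset.sum_congr rfl fun x hx => by push_cast; ring
  | neg z hz ihz =>
      obtain ⟨t, c, ht, hc, rfl⟩ := ihz
      exact ⟨t, fun x => -c x, ht, fun x hx => zloc_neg_mem (hc x hx),
        by rw [← Finset.sum_neg_distrib]; exact Finset.sum_congr rfl fun x _ => by push_cast; ring⟩

/-- Key independence consequence: differences of distinct basis elements are not in `pG`. -/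
lemma key_not_div (hp : p.Prime) {B : Set ℝ} (hind : LinIndepOverZLoc p B)
    {b b' : ℝ} (hb : b ∈ B) (hb' : b' ∈ B) (hne : b ≠ b') {x : ℝ}
    (hx : x ∈ GpSubgroup p B) : b - b' ≠ (p : ℝ) * x := by
  intro heq
  obtain ⟨t, c, ht, hc, rfl⟩ := gp_repr hp hx
  set c' : ℝ → ℚ := fun x => if x ∈ t then c x else 0 with hc'
  set d : ℝ → ℚ := fun x => p * c' x - (if x = b then 1 else 0) + (if x = b' then 1 else 0)
    with hd
  set t' : Finset ℝ := insert b (insert b' t) with ht'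
  have htsub : t ⊆ t' := fun x hx => by simp [ht', Finset.mem_insert_of_mem, hx]
  have hbt : b ∈ t' := by simp [ht']
  have hb't : b' ∈ t' := by simp [ht']
  have hsum : ∑ x ∈ t', (d x : ℝ) * x = 0 := by
    have e1 : ∑ x ∈ t', ((c' x : ℚ) : ℝ) * x = ∑ x ∈ t, (c x : ℝ) * x := by
      simp only [hc']
      exact sum_ite_restrict t' t c htsub
    have e2 : ∑ x ∈ t', ((if x = b then (1:ℚ) else 0) : ℝ) * x = b := by
      rw [Finset.sum_eq_single b]
      · simp
      · intro x _ hx; simp [hx]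
      · intro h; exact absurd hbt h
    have e3 : ∑ x ∈ t', ((if x = b' then (1:ℚ) else 0) : ℝ) * x = b' := by
      rw [Finset.sum_eq_single b']
      · simp
      · intro x _ hx; simp [hx]
      · intro h; exact absurd hb't h
    have : ∑ x ∈ t', (d x : ℝ) * x
        = (p : ℝ) * (∑ x ∈ t', ((c' x : ℚ) : ℝ) * x)
          - (∑ x ∈ t', ((if x = b then (1:ℚ) else 0) : ℝ) * x)
          + (∑ x ∈ t', ((if x = b' then (1:ℚ) else 0) : ℝ) * x) := by
      rw [Finset.mul_sum, ← Finset.sum_sub_distrib, ← Finset.sum_add_distrib]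
      refine Finset.sum_congr rfl fun x _ => ?_
      simp only [hd]
      split_ifs <;> push_cast <;> ring
    rw [this, e1, e2, e3, ← heq]
    ring
  have hsubB : ↑t' ⊆ B := by
    intro x hx
    simp only [ht', Finset.coe_insert, Set.mem_insert_iff] at hx
    rcases hx with rfl | rfl | hx
    exacts [hb, hb', ht hx]
  have hmemd : ∀ x ∈ t', d x ∈ ZLocSet p := by
    intro x _
    have h1 : c' x ∈ ZLocSet p := by
      simp only [hc']; split
      exacts [hc x ‹_›, zloc_zero_mem hp]
    have h2 : (if x = b then (1:ℚ) else 0) ∈ ZLocSet p := by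
      split; exacts [zloc_one_mem hp, zloc_zero_mem hp]
    have h3 : (if x = b' then (1:ℚ) else 0) ∈ ZLocSet p := by
      split; exacts [zloc_one_mem hp, zloc_zero_mem hp]
    have hpc : (p : ℚ) * c' x ∈ ZLocSet p :=
      zloc_mul_mem hp (by exact_mod_cast zloc_int_mem hp p) h1
    exact zloc_add_mem hp (zloc_sub_mem hp hpc h2) h3
  have hdb := hind t' d hsubB hmemd hsum b hbt
  simp only [hd, if_pos rfl, if_neg hne] at hdb
  norm_num at hdb
  have h1 : c' b ∈ ZLocSet p := by
    simp only [hc']; split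
    exacts [hc b ‹_›, zloc_zero_mem hp]
  have : (p : ℚ) * c' b = 1 := by linarith
  exact zloc_no_inv hp h1 this

/-- Divisibility of `GpSubgroup` by primes `q ≠ p`. -/
lemma gp_div (hp : p.Prime) {q : ℕ} (hq : q.Prime) (hne : q ≠ p) {B : Set ℝ} {x : ℝ}
    (hx : x ∈ GpSubgroup p B) : ∃ y ∈ GpSubgroup p B, (q : ℝ) * y = x := by
  have hq0 : (q : ℝ) ≠ 0 := Nat.cast_ne_zero.mpr hq.ne_zero
  induction hx using AddSubgroup.closure_induction with
  | mem z hz =>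
      obtain ⟨c, hc, b, hb, rfl⟩ := hz
      refine ⟨((c / q : ℚ) : ℝ) * b,
        AddSubgroup.subset_closure ⟨c / q, zloc_div_mem hp hq hne hc, b, hb, rfl⟩, ?_⟩
      push_cast
      field_simp
  | zero => exact ⟨0, zero_mem _, by simp⟩
  | add z w hz hw ihz ihw =>
      obtain ⟨y1, hy1, h1⟩ := ihz
      obtain ⟨y2, hy2, h2⟩ := ihw
      exact ⟨y1 + y2, add_mem hy1 hy2, by rw [mul_add, h1, h2]⟩
  | neg z hz ihz =>
      obtain ⟨y, hy, h⟩ := ihz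
      exact ⟨-y, neg_mem hy, by rw [mul_neg, h]⟩

end Aux
lemma mem_nSMul {G : Type*} [AddCommGroup G] {n : ℕ} {x : G} :
    x ∈ nSMulSubgroup G n ↔ ∃ g, n • g = x := Iff.rfl

/-- The embedding of a basis element of `B i` into the direct sum. -/
def embFun (m : ℕ) (p : Fin m → ℕ) (k : Fin m → ℕ) (B : Fin m → Set ℝ) (i : Fin m)
    (hpi : (p i).Prime) (x : ℝ) (hx : x ∈ B i) :
    ℚ × ((i' : Fin m) → Fin (k i') → (GpSubgroup (p i') (B i'))) :=
  (0, fun i' _ => if h : i' = i then ⟨x, by rw [h]; exact basis_mem hpi hx⟩ else 0)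

lemma embFun_snd_at (m : ℕ) (p : Fin m → ℕ) (k : Fin m → ℕ) (B : Fin m → Set ℝ) (i : Fin m)
    (hpi : (p i).Prime) (x : ℝ) (hx : x ∈ B i) (j : Fin (k i)) :
    (((embFun m p k B i hpi x hx).2 i j : ℝ)) = x := by
  simp [embFun]

/-- The singular primes of `G = ℚ ⊕ ⨁ᵢ G_{pᵢ}^{kᵢ}` are exactly `p₀, …, p_{m-1}`:
`G/pᵢG` is infinite for each `i`, and `qG = G` for any prime `q` outside the list. -/
theorem singular_primes_of_direct_sum (m : ℕ) (p : Fin m → ℕ) (hp : ∀ i, (p i).Prime)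
    (hdist : Function.Injective p) (k : Fin m → ℕ) (hk : ∀ i, 0 < k i)
    (B : Fin m → Set ℝ) (hB : ∀ i, (B i).Infinite)
    (hind : ∀ i, LinIndepOverZLoc (p i) (B i)) :
    (∀ i : Fin m,
      Infinite ((ℚ × ((i' : Fin m) → Fin (k i') → (GpSubgroup (p i') (B i')))) ⧸
        nSMulSubgroup (ℚ × ((i' : Fin m) → Fin (k i') → (GpSubgroup (p i') (B i')))) (p i))) ∧
    ∀ q : ℕ, q.Prime → (∀ i : Fin m, q ≠ p i) →
      nSMulSubgroup (ℚ × ((i' : Fin m) → Fin (k i') → (GpSubgroup (p i') (B i')))) q = ⊤ := by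
  refine ⟨fun i => ?_, fun q hq hqne => ?_⟩
  · -- Part 1: `G / pᵢ G` is infinite
    have hpi := hp i
    set G := ℚ × ((i' : Fin m) → Fin (k i') → (GpSubgroup (p i') (B i'))) with hGdef
    let j0 : Fin (k i) := ⟨0, hk i⟩
    have hinj : Function.Injective (fun x : B i =>
        (QuotientAddGroup.mk (embFun m p k B i hpi x.1 x.2) :
          G ⧸ nSMulSubgroup G (p i))) := by
      intro x x' hxx
      rw [QuotientAddGroup.eq] at hxx
      rw [mem_nSMul] at hxx
      obtain ⟨g, hg⟩ := hxx
      have hval := congrArg (fun z : G => ((z.2 i j0 : ℝ))) hg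
      have hL : (((((p i) • g).2) i j0 : ℝ)) = (p i : ℝ) * ((g.2 i j0 : ℝ)) := by
        rw [Prod.smul_snd, Pi.smul_apply, Pi.smul_apply]
        push_cast
        rw [nsmul_eq_mul]
      have hR : ((((-embFun m p k B i hpi x.1 x.2 + embFun m p k B i hpi x'.1 x'.2).2) i j0 : ℝ))
          = x'.1 - x.1 := by
        rw [Prod.snd_add, Prod.snd_neg, Pi.add_apply, Pi.neg_apply, Pi.add_apply, Pi.neg_apply]
        push_cast
        rw [embFun_snd_at, embFun_snd_at]
        ring
      have heq : (p i : ℝ) * ((g.2 i j0 : ℝ)) = x'.1 - x.1 := by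
        rw [← hL, hval, hR]
      by_contra hne
      exact key_not_div hpi (hind i) x'.2 x.2 (fun h => hne (Subtype.ext h.symm))
        (g.2 i j0).2 heq.symm
    haveI := (hB i).to_subtype
    exact Infinite.of_injective _ hinj
  · -- Part 2: `qG = G`
    ext g
    simp only [AddSubgroup.mem_top, iff_true, mem_nSMul]
    have hq0 : (q : ℚ) ≠ 0 := Nat.cast_ne_zero.mpr hq.ne_zero
    have hdiv : ∀ (i' : Fin m) (j : Fin (k i')),
        ∃ y, y ∈ GpSubgroup (p i') (B i') ∧ (q : ℝ) * y = ((g.2 i' j : ℝ)) := by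
      intro i' j
      obtain ⟨y, hy, h⟩ := gp_div (hp i') hq (hqne i') (g.2 i' j).2
      exact ⟨y, hy, h⟩
    choose y hy hqy using hdiv
    refine ⟨(g.1 / q, fun i' j => ⟨y i' j, hy i' j⟩), ?_⟩
    refine Prod.ext ?_ ?_
    · show q • (g.1 / q) = g.1
      rw [nsmul_eq_mul, mul_div_cancel₀ _ hq0]
    · funext i' j
      apply Subtype.ext
      rw [Prod.smul_snd, Pi.smul_apply, Pi.smul_apply]
      push_cast
      rw [nsmul_eq_mul]
      exact hqy i' j
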